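/- For nonnegative integers l and r, define p^{LR}_{l,r} = 3·C(l+r, l)·∫₀¹ (1-a)³ · aˡ⁺ʳ/(1+a)^{l+r+1} da. Then the double series ∑_{m≥1} ∑_{l=0}^{m} (l/m)·p^{LR}_{l,m-l} equals 17/2 − 12·ln 2. -/

import Mathlib

noncomputable def pLR (l r : ℕ) : ℝ :=
  3 * (Nat.choose (l + r) l : ℝ) *
    ∫ a in (0:ℝ)..1, (1 - a)^3 * a^(l + r) / (1 + a)^(l + r + 1)

open MeasureTheory Finset Real

noncomputable def fm (m : ℕ) (a : ℝ) : ℝ :=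
  3 * 2^m * ((1 - a)^3 * a^(m+1) / (1 + a)^(m+1+1))

lemma fm_measurable (m : ℕ) : Measurable (fm m) := by
  unfold fm
  fun_prop

lemma nat_sum_choose (m : ℕ) :
    ∑ l ∈ range (m+2), l * Nat.choose (m+1) l = (m+1) * 2^m := by
  rw [Finset.sum_range_succ']
  have h : ∀ k, (k+1) * Nat.choose (m+1) (k+1) = (m+1) * Nat.choose m k := by
    intro k
    rw [mul_comm (k+1), ← Nat.add_one_mul_choose_eq]
  calc (∑ k ∈ range (m+1), (k+1) * Nat.choose (m+1) (k+1)) + 0 * Nat.choose (m+1) 0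
      = ∑ k ∈ range (m+1), (m+1) * Nat.choose m k := by
        simp only [Nat.zero_mul, add_zero]
        exact Finset.sum_congr rfl fun k _ => h k
    _ = (m+1) * ∑ k ∈ range (m+1), Nat.choose m k := by rw [Finset.mul_sum]
    _ = (m+1) * 2^m := by rw [Nat.sum_range_choose]

lemma innerSumEq (m : ℕ) :
    ∑ l ∈ Finset.range (m + 2), ((l : ℝ) / ((m : ℝ) + 1)) * pLR l (m + 1 - l)
      = ∫ a in (0:ℝ)..1, fm m a := by
  set I := ∫ a in (0:ℝ)..1, (1 - a)^3 * a^(m+1) / (1 + a)^(m+1+1) with hIdef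
  have hm : ((m:ℝ)+1) ≠ 0 := by positivity
  have step : ∀ l ∈ Finset.range (m+2),
      ((l : ℝ) / ((m : ℝ) + 1)) * pLR l (m + 1 - l)
        = ((l * Nat.choose (m+1) l : ℕ) : ℝ) * (3 / ((m:ℝ)+1) * I) := by
    intro l hl
    have hl' : l ≤ m + 1 := by
      have := Finset.mem_range.mp hl; omega
    have h1 : l + (m + 1 - l) = m + 1 := by omega
    rw [pLR, h1]
    push_cast
    ring
  rw [Finset.sum_congr rfl step, ← Finset.sum_mul, ← Nat.cast_sum, nat_sum_choose]
  have hint : ∫ a in (0:ℝ)..1, fm m a = (3 * 2^m) * I := by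
    unfold fm
    rw [intervalIntegral.integral_const_mul]
  rw [hint]
  push_cast
  field_simp

lemma hasSum_fm {a : ℝ} (ha : a ∈ Set.Ioc (0:ℝ) 1) :
    HasSum (fun m => fm m a) (3 * a * (1-a)^2 / (1+a)) := by
  have h0 : 0 < a := ha.1
  have h1a : (0:ℝ) < 1 + a := by linarith
  rcases eq_or_lt_of_le ha.2 with h1 | h1
  · have : (fun m => fm m a) = fun _ => (0:ℝ) := by
      funext m; simp [fm, h1]
    rw [this, h1]
    simpa using hasSum_zero
  · have hrlt : 2*a/(1+a) < 1 := by
      rw [div_lt_one h1a]; linarith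
    have hr0 : 0 ≤ 2*a/(1+a) := by positivity
    have hgeo := (hasSum_geometric_of_lt_one hr0 hrlt).mul_left
      (3 * (1-a)^3 * a / (1+a)^2)
    have hfun : (fun m => fm m a)
        = fun m => 3 * (1-a)^3 * a / (1+a)^2 * (2*a/(1+a))^m := by
      funext m
      unfold fm
      rw [div_pow, mul_pow]
      field_simp
      ring
    have hval : 3 * (1-a)^3 * a / (1+a)^2 * (1 - 2*a/(1+a))⁻¹
        = 3 * a * (1-a)^2 / (1+a) := by
      have h1a' : (1:ℝ) - 2*a/(1+a) = (1-a)/(1+a) := by field_simp; ring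
      have hne1 : (1:ℝ) - a ≠ 0 := by linarith
      have hne2 : (1:ℝ) + a ≠ 0 := h1a.ne'
      rw [h1a']
      field_simp
    rw [hfun, ← hval]
    exact hgeo

lemma final_integral :
    ∫ a in (0:ℝ)..1, 3 * a * (1-a)^2 / (1+a) = 17/2 - 12 * Real.log 2 := by
  have hderiv : ∀ x ∈ Set.uIcc (0:ℝ) 1,
      HasDerivAt (fun x : ℝ => x^3 - 9/2*x^2 + 12*x - 12*Real.log (1+x))
        (3 * x * (1-x)^2 / (1+x)) x := by
    intro x hx
    rw [Set.uIcc_of_le (by norm_num : (0:ℝ) ≤ 1)] at hx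
    have hx0 : (0:ℝ) < 1 + x := by linarith [hx.1]
    have hlog : HasDerivAt (fun x : ℝ => Real.log (1+x)) (1/(1+x)) x := by
      have h := (Real.hasDerivAt_log hx0.ne').comp x
        ((hasDerivAt_id x).const_add 1)
      simpa [Function.comp_def] using h
    have h : HasDerivAt (fun x : ℝ => x^3 - 9/2*x^2 + 12*x - 12*Real.log (1+x)) _ x := (((hasDerivAt_pow 3 x).sub
      (((hasDerivAt_pow 2 x).const_mul (9/2:ℝ)))).add
      ((hasDerivAt_id x).const_mul 12)).sub (hlog.const_mul 12)
    convert h using 1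
    field_simp
    ring
  have hcont : ContinuousOn (fun x : ℝ => 3 * x * (1-x)^2 / (1+x)) (Set.uIcc 0 1) := by
    apply ContinuousOn.div
    · fun_prop
    · fun_prop
    · intro x hx
      rw [Set.uIcc_of_le (by norm_num : (0:ℝ) ≤ 1)] at hx
      have := hx.1; positivity
  rw [intervalIntegral.integral_eq_sub_of_hasDerivAt hderiv
    (hcont.intervalIntegrable)]
  have : (1:ℝ) + 1 = 2 := by norm_num
  simp [this, Real.log_one]
  ring

theorem stit_left_T_sum :
    (∑' m : ℕ, ∑ l ∈ Finset.range (m + 2),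
        ((l : ℝ) / ((m : ℝ) + 1)) * pLR l (m + 1 - l))
      = 17/2 - 12 * Real.log 2 := by
  have meas : ∀ m, AEStronglyMeasurable (fm m)
      (volume.restrict (Set.Ioc (0:ℝ) 1)) :=
    fun m => (fm_measurable m).aestronglyMeasurable
  have key : ∀ a ∈ Set.Ioc (0:ℝ) 1,
      ∑' m, (‖fm m a‖₊ : ENNReal) ≤ ENNReal.ofReal 3 := by
    intro a ha
    have hs := hasSum_fm ha
    have hnn : ∀ m, 0 ≤ fm m a := by
      intro m
      have h1 : 0 ≤ 1 - a := by linarith [ha.2]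
      have h2 : 0 < 1 + a := by linarith [ha.1]
      unfold fm
      have h3 : (0:ℝ) ≤ a := ha.1.le
      exact mul_nonneg (by positivity)
        (div_nonneg (mul_nonneg (pow_nonneg h1 3) (pow_nonneg h3 _))
          (pow_nonneg h2.le _))
    have heq : ∀ m, (‖fm m a‖₊ : ENNReal) = ENNReal.ofReal (fm m a) := fun m =>
      Real.enorm_eq_ofReal (hnn m)
    calc ∑' m, (‖fm m a‖₊ : ENNReal) = ∑' m, ENNReal.ofReal (fm m a) := by
          exact tsum_congr heq
      _ = ENNReal.ofReal (∑' m, fm m a) :=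
          (ENNReal.ofReal_tsum_of_nonneg hnn hs.summable).symm
      _ ≤ ENNReal.ofReal 3 := by
          apply ENNReal.ofReal_le_ofReal
          rw [hs.tsum_eq]
          have h1 : 0 ≤ 1 - a := by linarith [ha.2]
          have h2 : (0:ℝ) < 1 + a := by linarith [ha.1]
          rw [div_le_iff₀ h2]
          nlinarith [ha.1, ha.2, sq_nonneg (1-a)]
  have hfin : ∑' m, ∫⁻ a in Set.Ioc (0:ℝ) 1, ‖fm m a‖₊ ≠ ⊤ := by
    rw [← MeasureTheory.lintegral_tsum
      (fun m => (fm_measurable m).nnnorm.coe_nnreal_ennreal.aemeasurable)]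
    have hle : ∫⁻ a in Set.Ioc (0:ℝ) 1, ∑' m, (‖fm m a‖₊ : ENNReal)
        ≤ ∫⁻ _ in Set.Ioc (0:ℝ) 1, ENNReal.ofReal 3 := by
      apply MeasureTheory.setLIntegral_mono measurable_const key
    have : ∫⁻ _ in Set.Ioc (0:ℝ) 1, ENNReal.ofReal 3 = ENNReal.ofReal 3 * 1 := by
      rw [MeasureTheory.setLIntegral_const]
      simp
    exact ne_top_of_le_ne_top (by rw [this]; simp) hle
  calc (∑' m : ℕ, ∑ l ∈ Finset.range (m + 2),
        ((l : ℝ) / ((m : ℝ) + 1)) * pLR l (m + 1 - l))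
      = ∑' m, ∫ a in (0:ℝ)..1, fm m a := tsum_congr innerSumEq
    _ = ∑' m, ∫ a in Set.Ioc (0:ℝ) 1, fm m a := by
        refine tsum_congr fun m => ?_
        rw [intervalIntegral.integral_of_le (by norm_num : (0:ℝ) ≤ 1)]
    _ = ∫ a in Set.Ioc (0:ℝ) 1, ∑' m, fm m a :=
        (MeasureTheory.integral_tsum meas hfin).symm
    _ = ∫ a in Set.Ioc (0:ℝ) 1, 3 * a * (1-a)^2 / (1+a) := by
        apply MeasureTheory.setIntegral_congr_fun measurableSet_Ioc
        intro a ha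
        exact (hasSum_fm ha).tsum_eq
    _ = ∫ a in (0:ℝ)..1, 3 * a * (1-a)^2 / (1+a) :=
        (intervalIntegral.integral_of_le (by norm_num : (0:ℝ) ≤ 1)).symm
    _ = 17/2 - 12 * Real.log 2 := final_integral
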